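/- Let G be a group with a subgroup N of index 2 and a group isomorphism θ : N → ℤ × ℤ, and suppose there exists c ∈ G with c ∉ N such that θ(c·n·c⁻¹) = (a, −b) whenever θ(n) = (a, b), and θ(c²) = (1, 0). Then every element g ∈ G with g ∉ N has infinite order. In particular G contains no subgroup of order 2 meeting the nontrivial coset, so G is not a semidirect product of N by ℤ/2ℤ. -/

import Mathlib

/-- The non-split extension `J₄` of `ℤ₂` by `ℤ²`: let `N` be an index-2 subgroup of
`G` with `θ : N ≃ ℤ × ℤ`, and suppose there is `c ∉ N` whose conjugation acts on `N`
as `(a, b) ↦ (a, −b)` and with `θ(c²) = (1, 0)`. Then every `g ∉ N` has infinite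
order; in particular `G` has no subgroup of order 2 meeting the nontrivial coset,
so the extension does not split. -/
theorem klein_bottle_extension_no_split
    {G : Type*} [Group G] (N : Subgroup G) (hidx : N.index = 2)
    (θ : N ≃* Multiplicative (ℤ × ℤ)) (c : G) (hc : c ∉ N)
    (hconj : ∀ (n : N) (h : c * (n : G) * c⁻¹ ∈ N),
      Multiplicative.toAdd (θ ⟨c * (n : G) * c⁻¹, h⟩) =
        ((Multiplicative.toAdd (θ n)).1, -(Multiplicative.toAdd (θ n)).2))
    (hc2 : ∀ h : c ^ 2 ∈ N, Multiplicative.toAdd (θ ⟨c ^ 2, h⟩) = (1, 0)) :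
    (∀ g : G, g ∉ N → ¬ IsOfFinOrder g) ∧
      ¬ ∃ H : Subgroup G, Nat.card H = 2 ∧ ∃ g ∈ H, g ∉ N := by
  have key : ∀ g : G, g ∉ N → ¬ IsOfFinOrder g := by
    intro g hg hfin
    have hcinv : c⁻¹ ∉ N := fun h => hc (by simpa using N.inv_mem h)
    have hn : c⁻¹ * g ∈ N := by
      rw [Subgroup.mul_mem_iff_of_index_two hidx]; simp [hcinv, hg]
    set n : N := ⟨c⁻¹ * g, hn⟩ with hn_def
    have hmN : c⁻¹ * (n : G) * c ∈ N := by
      rw [Subgroup.mul_mem_iff_of_index_two hidx,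
        Subgroup.mul_mem_iff_of_index_two hidx]
      simp [hcinv, hc, hn]
    set m : N := ⟨c⁻¹ * (n : G) * c, hmN⟩ with hm_def
    have hcm : c * (m : G) * c⁻¹ = (n : G) := by
      simp [hm_def]; group
    have hmem : c * (m : G) * c⁻¹ ∈ N := hcm ▸ n.2
    have h1 : Multiplicative.toAdd (θ n) =
        ((Multiplicative.toAdd (θ m)).1, -(Multiplicative.toAdd (θ m)).2) := by
      have := hconj m hmem
      rwa [show (⟨c * (m : G) * c⁻¹, hmem⟩ : N) = n from Subtype.ext hcm] at this
    have hsq : c ^ 2 ∈ N := Subgroup.sq_mem_of_index_two hidx c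
    have hg2N : g ^ 2 ∈ N := Subgroup.sq_mem_of_index_two hidx g
    have hg2 : (⟨g ^ 2, hg2N⟩ : N) = ⟨c ^ 2, hsq⟩ * m * n := by
      apply Subtype.ext
      show g ^ 2 = c ^ 2 * (c⁻¹ * (c⁻¹ * g) * c) * (c⁻¹ * g)
      simp only [pow_two]
      group
    have hval : Multiplicative.toAdd (θ ⟨g ^ 2, hg2N⟩) =
        (1 + 2 * (Multiplicative.toAdd (θ m)).1, 0) := by
      have hθ : θ ⟨g ^ 2, hg2N⟩ = θ ⟨c ^ 2, hsq⟩ * θ m * θ n := by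
        rw [hg2, map_mul, map_mul]
      rw [hθ, toAdd_mul, toAdd_mul, hc2 hsq, h1]
      refine Prod.ext (by simp; ring) (by simp)
    -- g² has finite order, transfer to ℤ × ℤ
    obtain ⟨k, hk, hpow⟩ := isOfFinOrder_iff_pow_eq_one.1 (hfin.pow (n := 2))
    have hNpow : (⟨g ^ 2, hg2N⟩ : N) ^ k = 1 := by
      apply Subtype.ext
      push_cast
      exact hpow
    have : (θ ⟨g ^ 2, hg2N⟩) ^ k = 1 := by rw [← map_pow, hNpow, map_one]
    have hz : k • Multiplicative.toAdd (θ ⟨g ^ 2, hg2N⟩) = 0 := by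
      rw [← toAdd_pow, this, toAdd_one]
    rw [hval] at hz
    have hfst : (k : ℤ) * (1 + 2 * (Multiplicative.toAdd (θ m)).1) = 0 := by
      have := congrArg Prod.fst hz
      simpa only [Prod.smul_fst, Prod.fst_zero, nsmul_eq_mul, Prod.fst_mul, Prod.fst_natCast] using this
    rcases mul_eq_zero.1 hfst with h | h
    · omega
    · omega
  refine ⟨key, ?_⟩
  rintro ⟨H, hH2, g, hgH, hgN⟩
  have : Finite H := Nat.finite_of_card_ne_zero (by omega)
  have hfin : IsOfFinOrder (⟨g, hgH⟩ : H) := isOfFinOrder_of_finite _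
  obtain ⟨k, hk, hpow⟩ := isOfFinOrder_iff_pow_eq_one.1 hfin
  exact key g hgN (isOfFinOrder_iff_pow_eq_one.2
    ⟨k, hk, by simpa using congrArg (Subtype.val) hpow⟩)
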